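/- arXiv:2406.01282 — 9 statements merged into one kernel-verified Lean document; each statement's English description precedes it below -/
import Mathlib

section
/- Let κ < 0, let x and y be points of the Poincaré ball of curvature κ with y ≠ x, and let t ∈ (0, 1]. Then exp^κ_x(t · log^κ_x(y)) = x ⊕κ ((−x ⊕κ y) ⊗κ t), i.e. moving from x along the exponential map in the direction t·log^κ_x(y) lands exactly at the Möbius-gyrovector point of parameter t on the geodesic from x to y. -/
open Real Filter

open scoped RealInnerProductSpace

/-- Inverse hyperbolic tangent. -/
noncomputable def artanh (x : ℝ) : ℝ := (1 / 2) * Real.log ((1 + x) / (1 - x))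

variable {E : Type*} [NormedAddCommGroup E] [InnerProductSpace ℝ E]

/-- Möbius (gyrovector) addition on the Poincaré ball of curvature `κ`. -/
noncomputable def mAdd (κ : ℝ) (x y : E) : E :=
  (1 - 2 * κ * ⟪x, y⟫ + κ ^ 2 * ‖x‖ ^ 2 * ‖y‖ ^ 2)⁻¹ •
    ((1 - 2 * κ * ⟪x, y⟫ - κ * ‖y‖ ^ 2) • x + (1 + κ * ‖x‖ ^ 2) • y)

/-- Conformal factor `λκ(x) = 2 / (1 + κ‖x‖²)`. -/
noncomputable def lam (κ : ℝ) (x : E) : ℝ := 2 / (1 + κ * ‖x‖ ^ 2)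

open Classical in
/-- Möbius scalar multiplication `r ⊗κ x`. -/
noncomputable def mSmul (κ r : ℝ) (x : E) : E :=
  if x = 0 then 0
  else ((1 / Real.sqrt (-κ)) * Real.tanh (r * _root_.artanh (Real.sqrt (-κ) * ‖x‖)) * ‖x‖⁻¹) • x

open Classical in
/-- Exponential map of the Poincaré ball at `x` with curvature `κ`. -/
noncomputable def expMap (κ : ℝ) (x v : E) : E :=
  if v = 0 then x
  else mAdd κ x
    ((Real.tanh (Real.sqrt (-κ) * lam κ x * ‖v‖ / 2) / (Real.sqrt (-κ) * ‖v‖)) • v)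

/-- Logarithmic map of the Poincaré ball at `x` with curvature `κ`. -/
noncomputable def logMap (κ : ℝ) (x y : E) : E :=
  ((2 / (Real.sqrt (-κ) * lam κ x)) * _root_.artanh (Real.sqrt (-κ) * ‖mAdd κ (-x) y‖) *
      ‖mAdd κ (-x) y‖⁻¹) • mAdd κ (-x) y

/-- Geodesic distance of the Poincaré ball of curvature `κ`. -/
noncomputable def dK (κ : ℝ) (x y : E) : ℝ :=
  (2 / Real.sqrt (-κ)) * _root_.artanh (Real.sqrt (-κ) * ‖mAdd κ (-x) y‖)

/-- Membership in the Poincaré ball of curvature `κ`: `κ·‖x‖² > −1`. -/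
def inBall (κ : ℝ) (x : E) : Prop := κ * ‖x‖ ^ 2 > -1

lemma mAdd_zero_right (κ : ℝ) (x : E) : mAdd κ x (0 : E) = x := by
  simp [mAdd]

lemma mAdd_neg_ne_zero (κ : ℝ) (hκ : κ < 0) (x y : E) (hx : inBall κ x) (hy : inBall κ y)
    (hxy : y ≠ x) : mAdd κ (-x) y ≠ 0 := by
  intro h
  have hx' : κ * ‖x‖ ^ 2 > -1 := hx
  have hy' : κ * ‖y‖ ^ 2 > -1 := hy
  have hx0 : κ * ‖x‖ ^ 2 ≤ 0 := mul_nonpos_of_nonpos_of_nonneg hκ.le (by positivity)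
  have hy0 : κ * ‖y‖ ^ 2 ≤ 0 := mul_nonpos_of_nonpos_of_nonneg hκ.le (by positivity)
  have hcs : |⟪x, y⟫| ≤ ‖x‖ * ‖y‖ := abs_real_inner_le_norm x y
  have hcs1 : ⟪x, y⟫ ≤ ‖x‖ * ‖y‖ := (abs_le.mp hcs).2
  have hcs2 : -(‖x‖ * ‖y‖) ≤ ⟪x, y⟫ := (abs_le.mp hcs).1
  have hq : (κ * (‖x‖ * ‖y‖)) ^ 2 < 1 := by nlinarith
  have hq2 : (κ * ⟪x, y⟫) ^ 2 ≤ (κ * (‖x‖ * ‖y‖)) ^ 2 := by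
    have h1 := sq_le_sq' hcs2 hcs1
    nlinarith [sq_nonneg κ]
  have hip : 1 + κ * ⟪x, y⟫ > 0 := by nlinarith
  have hD : 1 - 2 * κ * ⟪-x, y⟫ + κ ^ 2 * ‖(-x : E)‖ ^ 2 * ‖y‖ ^ 2 > 0 := by
    rw [inner_neg_left, norm_neg]
    nlinarith [sq_nonneg (1 + κ * (‖x‖ * ‖y‖))]
  rw [mAdd, smul_eq_zero] at h
  rcases h with h | h
  · exact absurd (inv_eq_zero.mp h) hD.ne'
  · rw [inner_neg_left, norm_neg] at h
    have hα : (0:ℝ) < 1 + κ * ‖x‖ ^ 2 := by linarith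
    set s : ℝ := (1 + κ * ‖x‖ ^ 2)⁻¹ * (1 - 2 * κ * -⟪x, y⟫ - κ * ‖y‖ ^ 2) with hs
    have hyx : y = s • x := by
      have hN : (1 + κ * ‖x‖ ^ 2) • y = (1 - 2 * κ * -⟪x, y⟫ - κ * ‖y‖ ^ 2) • x := by
        rw [smul_neg] at h
        rw [eq_comm, ← neg_add_eq_zero, ← h]
      rw [hs, mul_smul, ← hN, smul_smul, inv_mul_cancel₀ hα.ne', one_smul]
    have hI : ⟪x, y⟫ = s * ‖x‖ ^ 2 := by
      rw [hyx, real_inner_smul_right, real_inner_self_eq_norm_sq]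
    have hY : ‖y‖ ^ 2 = s ^ 2 * ‖x‖ ^ 2 := by
      rw [hyx, norm_smul, Real.norm_eq_abs, mul_pow, sq_abs]
    have heq : s * (1 + κ * ‖x‖ ^ 2) = 1 - 2 * κ * -⟪x, y⟫ - κ * ‖y‖ ^ 2 := by
      rw [hs]; field_simp
    have key : (s - 1) * (1 + κ * ⟪x, y⟫) = 0 := by
      linear_combination heq + κ * (s + 1) * hI - κ * hY
    have hs1 : s = 1 := by
      rcases mul_eq_zero.mp key with h1 | h1
      · linarith
      · linarith
    apply hxy
    rw [hyx, hs1, one_smul]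

theorem exp_smul_log_eq_mobius_geodesic
    (κ : ℝ) (hκ : κ < 0) (x y : E) (hx : inBall κ x) (hy : inBall κ y) (hxy : y ≠ x)
    (t : ℝ) (ht0 : 0 < t) (ht1 : t ≤ 1) :
    expMap κ x (t • logMap κ x y) = mAdd κ x (mSmul κ t (mAdd κ (-x) y)) := by
  have hc : 0 < Real.sqrt (-κ) := Real.sqrt_pos.mpr (by linarith)
  set c := Real.sqrt (-κ) with hcdef
  have hlx : (0:ℝ) < 1 + κ * ‖x‖ ^ 2 := by
    have : κ * ‖x‖ ^ 2 > -1 := hx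
    linarith
  have hlam : 0 < lam κ x := by rw [lam]; positivity
  set w := mAdd κ (-x) y with hwdef
  have hw : w ≠ 0 := mAdd_neg_ne_zero κ hκ x y hx hy hxy
  have hnw : (0:ℝ) < ‖w‖ := norm_pos_iff.mpr hw
  set A := _root_.artanh (c * ‖w‖) with hAdef
  have hlog : logMap κ x y = ((2 / (c * lam κ x)) * A * ‖w‖⁻¹) • w := rfl
  by_cases hA0 : A = 0
  · have hv : t • logMap κ x y = (0 : E) := by
      rw [hlog, hA0]; simp
    rw [hv, expMap, if_pos rfl, mSmul, if_neg hw, ← hAdef, hA0]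
    simp [mAdd_zero_right]
  · set P := t * (2 / (c * lam κ x)) * ‖w‖⁻¹ with hPdef
    have hPpos : 0 < P := by positivity
    have hv : t • logMap κ x y = (P * A) • w := by
      rw [hlog, smul_smul]; congr 1; rw [hPdef]; ring
    have hPA : P * A ≠ 0 := mul_ne_zero hPpos.ne' hA0
    have hvne : (P * A) • w ≠ (0 : E) := smul_ne_zero hPA hw
    rw [hv, expMap, if_neg hvne, mSmul, if_neg hw, ← hAdef]
    congr 1
    have hnv : ‖(P * A) • w‖ = P * |A| * ‖w‖ := by
      rw [norm_smul, Real.norm_eq_abs, abs_mul, abs_of_pos hPpos, mul_assoc]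
    have harg : c * lam κ x * ‖(P * A) • w‖ / 2 = t * |A| := by
      rw [hnv, hPdef, lam]
      field_simp
    have htt : Real.tanh (t * |A|) * A = Real.tanh (t * A) * |A| := by
      rcases le_or_gt 0 A with h | h
      · rw [abs_of_nonneg h]
      · rw [abs_of_neg h, mul_neg, Real.tanh_neg]; ring
    rw [harg, smul_smul]
    congr 1
    rw [hnv]
    have hAne : |A| ≠ 0 := abs_ne_zero.mpr hA0
    field_simp
    rw [htt, mul_comm (Real.tanh (t * A))]
end

section
/- (Proposition 1, geodesic-membership part.) Let κ < 0, let x and y be points of the Poincaré ball of curvature κ with y ≠ x, and let 0 < δ < τ. Define z = exp^κ_x((δ/τ) · log^κ_x(y)). Then dκ(x, z) + dκ(z, y) = dκ(x, y), i.e. the interpolated point z lies on the geodesic segment between x and y. -/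
open Real Filter

open scoped RealInnerProductSpace

variable {E : Type*} [NormedAddCommGroup E] [InnerProductSpace ℝ E]

/-! ### Auxiliary scalar lemmas -/

lemma tanh_formula (s : ℝ) : Real.tanh s = 1 - 2 / (Real.exp s ^ 2 + 1) := by
  have h : Real.exp s > 0 := Real.exp_pos s
  rw [Real.tanh_eq_sinh_div_cosh, Real.sinh_eq, Real.cosh_eq, Real.exp_neg]
  have h2 : Real.exp s ^ 2 + 1 > 0 := by positivity
  field_simp
  ring

lemma tanh_pos_of_pos {s : ℝ} (hs : 0 < s) : 0 < Real.tanh s := by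
  rw [tanh_formula]
  have h1 : 1 < Real.exp s := by
    have := Real.exp_lt_exp.mpr hs; simpa using this
  have h2 : (2:ℝ) < Real.exp s ^ 2 + 1 := by nlinarith
  have h3 : 2 / (Real.exp s ^ 2 + 1) < 1 := by
    rw [div_lt_one (by linarith)]; linarith
  linarith

lemma tanh_lt_tanh' {a b : ℝ} (h : a < b) : Real.tanh a < Real.tanh b := by
  rw [tanh_formula, tanh_formula]
  have ha : Real.exp a > 0 := Real.exp_pos a
  have hb : Real.exp b > 0 := Real.exp_pos b
  have h1 : Real.exp a < Real.exp b := Real.exp_lt_exp.mpr h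
  have h2 : Real.exp a ^ 2 < Real.exp b ^ 2 := by nlinarith
  have h3 : 2 / (Real.exp b ^ 2 + 1) < 2 / (Real.exp a ^ 2 + 1) := by
    apply div_lt_div_of_pos_left (by norm_num) (by positivity) (by linarith)
  linarith

lemma tanh_artanh {T : ℝ} (h1 : -1 < T) (h2 : T < 1) : Real.tanh (_root_.artanh T) = T := by
  have hp : (0:ℝ) < (1 + T) / (1 - T) := by
    apply div_pos <;> linarith
  have he : Real.exp (_root_.artanh T) ^ 2 = (1 + T) / (1 - T) := by
    rw [← Real.exp_nat_mul]
    have : ((2:ℕ):ℝ) * _root_.artanh T = Real.log ((1 + T) / (1 - T)) := by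
      unfold _root_.artanh; push_cast; ring
    rw [this, Real.exp_log hp]
  rw [tanh_formula, he]
  have h3 : (1:ℝ) - T > 0 := by linarith
  have h4 : (1 + T) / (1 - T) + 1 = 2 / (1 - T) := by field_simp; norm_num
  rw [h4, div_div_eq_mul_div]
  have h5 : 2 * (1 - T) / 2 = 1 - T := by ring
  rw [h5]; ring

lemma artanh_pos {T : ℝ} (h0 : 0 < T) (h1 : T < 1) : 0 < _root_.artanh T := by
  have : (1:ℝ) < (1 + T) / (1 - T) := by
    rw [lt_div_iff₀ (by linarith)]; linarith
  have := Real.log_pos this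
  unfold _root_.artanh; linarith

lemma artanh_sum {T T₁ : ℝ} (hT1 : T < 1) (hT₁0 : 0 ≤ T₁) (h₁ : T₁ ≤ T) :
    _root_.artanh T₁ + _root_.artanh ((T - T₁) / (1 - T * T₁)) = _root_.artanh T := by
  have hT0 : 0 ≤ T := le_trans hT₁0 h₁
  have hTT₁ : T * T₁ < 1 := by nlinarith
  have hd : (0:ℝ) < 1 - T * T₁ := by linarith
  have hT₁1 : T₁ < 1 := lt_of_le_of_lt h₁ hT1
  have e1 : 1 + (T - T₁) / (1 - T * T₁) = (1 + T) * (1 - T₁) / (1 - T * T₁) := by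
    field_simp; ring
  have e2 : 1 - (T - T₁) / (1 - T * T₁) = (1 - T) * (1 + T₁) / (1 - T * T₁) := by
    field_simp; ring
  have p1 : (0:ℝ) < (1 + T₁) / (1 - T₁) := div_pos (by linarith) (by linarith)
  have p2 : (0:ℝ) < (1 + T) * (1 - T₁) / (1 - T * T₁) / ((1 - T) * (1 + T₁) / (1 - T * T₁)) := by
    apply div_pos (div_pos (by nlinarith) hd) (div_pos (by nlinarith) hd)
  unfold _root_.artanh
  rw [e1, e2, ← mul_add, ← Real.log_mul (ne_of_gt p1) (ne_of_gt p2)]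
  congr 2
  have n1 : (1:ℝ) - T₁ ≠ 0 := by linarith
  have n2 : (1:ℝ) - T ≠ 0 := by linarith
  have n3 : (1:ℝ) + T₁ ≠ 0 := by linarith
  have n4 : (1:ℝ) - T * T₁ ≠ 0 := by linarith
  have n5 : (1:ℝ) - T₁ * T ≠ 0 := by linarith
  field_simp

/-! ### Auxiliary vector lemmas -/

lemma norm_add_smul_sq (A B : ℝ) (u v : E) :
    ‖A • u + B • v‖ ^ 2 = A ^ 2 * ‖u‖ ^ 2 + 2 * (A * B) * ⟪u, v⟫ + B ^ 2 * ‖v‖ ^ 2 := by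
  have h : ∀ w : E, ‖w‖ ^ 2 = ⟪w, w⟫ := fun w => (real_inner_self_eq_norm_sq w).symm
  rw [h, h, h]
  simp only [inner_add_left, inner_add_right, real_inner_smul_left, real_inner_smul_right,
    real_inner_comm v u]
  ring

lemma inner_combo (A B C D : ℝ) (u v : E) :
    ⟪A • u + B • v, C • u + D • v⟫ =
      A * C * ‖u‖ ^ 2 + (A * D + B * C) * ⟪u, v⟫ + B * D * ‖v‖ ^ 2 := by
  simp only [inner_add_left, inner_add_right, real_inner_smul_left, real_inner_smul_right,
    real_inner_comm v u, real_inner_self_eq_norm_sq]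
  ring

lemma norm_mAdd_sq (κ : ℝ) (u v : E) :
    ‖mAdd κ u v‖ ^ 2 =
      ((1 - 2 * κ * ⟪u, v⟫ - κ * ‖v‖ ^ 2) ^ 2 * ‖u‖ ^ 2
        + 2 * ((1 - 2 * κ * ⟪u, v⟫ - κ * ‖v‖ ^ 2) * (1 + κ * ‖u‖ ^ 2)) * ⟪u, v⟫
        + (1 + κ * ‖u‖ ^ 2) ^ 2 * ‖v‖ ^ 2) /
      (1 - 2 * κ * ⟪u, v⟫ + κ ^ 2 * ‖u‖ ^ 2 * ‖v‖ ^ 2) ^ 2 := by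
  rw [mAdd, norm_smul, mul_pow, Real.norm_eq_abs, sq_abs, norm_add_smul_sq, inv_pow,
    inv_mul_eq_div]

lemma norm_mAdd_sq' (κ : ℝ) (u v : E)
    (hD : 1 - 2 * κ * ⟪u, v⟫ + κ ^ 2 * ‖u‖ ^ 2 * ‖v‖ ^ 2 ≠ 0) :
    ‖mAdd κ u v‖ ^ 2 = ‖u + v‖ ^ 2 / (1 - 2 * κ * ⟪u, v⟫ + κ ^ 2 * ‖u‖ ^ 2 * ‖v‖ ^ 2) := by
  rw [norm_mAdd_sq, @norm_add_sq_real]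
  have hD' : 1 - 2 * κ * ⟪u, v⟫ + κ ^ 2 * ‖v‖ ^ 2 * ‖u‖ ^ 2 ≠ 0 := by rwa [mul_right_comm (κ ^ 2)]
  field_simp
  ring

lemma one_add_mul_norm_mAdd_sq (κ : ℝ) (u v : E)
    (hD : 1 - 2 * κ * ⟪u, v⟫ + κ ^ 2 * ‖u‖ ^ 2 * ‖v‖ ^ 2 ≠ 0) :
    1 + κ * ‖mAdd κ u v‖ ^ 2 =
      (1 + κ * ‖u‖ ^ 2) * (1 + κ * ‖v‖ ^ 2) /
        (1 - 2 * κ * ⟪u, v⟫ + κ ^ 2 * ‖u‖ ^ 2 * ‖v‖ ^ 2) := by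
  rw [norm_mAdd_sq]
  generalize hG : 1 - 2 * κ * ⟪u, v⟫ + κ ^ 2 * ‖u‖ ^ 2 * ‖v‖ ^ 2 = D at hD ⊢
  field_simp
  rw [← hG]
  ring

lemma Dpos {κ : ℝ} (hκ : κ < 0) {u v : E} (hu : κ * ‖u‖ ^ 2 > -1) (hv : κ * ‖v‖ ^ 2 > -1) :
    0 < 1 - 2 * κ * ⟪u, v⟫ + κ ^ 2 * ‖u‖ ^ 2 * ‖v‖ ^ 2 := by
  have h1 := abs_real_inner_le_norm u v
  have h2 := abs_le.mp h1
  have hm0 : (0:ℝ) ≤ ‖u‖ * ‖v‖ := mul_nonneg (norm_nonneg u) (norm_nonneg v)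
  have hs0 : (0:ℝ) ≤ -κ * ‖u‖ ^ 2 := by nlinarith [sq_nonneg ‖u‖]
  have ht0 : (0:ℝ) ≤ -κ * ‖v‖ ^ 2 := by nlinarith [sq_nonneg ‖v‖]
  have hm2 : κ ^ 2 * (‖u‖ * ‖v‖) ^ 2 < 1 := by nlinarith
  have hkm : 0 < 1 + κ * (‖u‖ * ‖v‖) := by nlinarith [sq_nonneg (1 + κ * (‖u‖ * ‖v‖))]
  nlinarith [mul_pos hkm hkm,
    mul_nonneg (by linarith : (0:ℝ) ≤ -2 * κ) (by linarith [h2.1] : (0:ℝ) ≤ ⟪u, v⟫ + ‖u‖ * ‖v‖)]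

lemma left_cancel (κ : ℝ) (x u : E)
    (hD : 1 - 2 * κ * ⟪x, u⟫ + κ ^ 2 * ‖x‖ ^ 2 * ‖u‖ ^ 2 ≠ 0)
    (hB : 1 + κ * ‖x‖ ^ 2 ≠ 0) :
    mAdd κ (-x) (mAdd κ x u) = u := by
  set D := 1 - 2 * κ * ⟪x, u⟫ + κ ^ 2 * ‖x‖ ^ 2 * ‖u‖ ^ 2 with hDdef
  set A := 1 - 2 * κ * ⟪x, u⟫ - κ * ‖u‖ ^ 2 with hAdef
  set B := 1 + κ * ‖x‖ ^ 2 with hBdef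
  have hm : mAdd κ x u = (D⁻¹ * A) • x + (D⁻¹ * B) • u := by
    rw [mAdd, smul_add, smul_smul, smul_smul]
  have hip : ⟪-x, mAdd κ x u⟫ = -(D⁻¹ * (A * ‖x‖ ^ 2 + B * ⟪x, u⟫)) := by
    rw [hm, inner_neg_left, inner_add_right, real_inner_smul_right, real_inner_smul_right,
      real_inner_self_eq_norm_sq]
    ring
  have hnm : ‖mAdd κ x u‖ ^ 2 =
      (D⁻¹ * A) ^ 2 * ‖x‖ ^ 2 + 2 * ((D⁻¹ * A) * (D⁻¹ * B)) * ⟪x, u⟫ + (D⁻¹ * B) ^ 2 * ‖u‖ ^ 2 := by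
    rw [hm, norm_add_smul_sq]
  conv_lhs => rw [mAdd, hip, hnm, norm_neg, hm]
  have hD2 : 1 - 2 * κ * -(D⁻¹ * (A * ‖x‖ ^ 2 + B * ⟪x, u⟫)) +
      κ ^ 2 * ‖x‖ ^ 2 * ((D⁻¹ * A) ^ 2 * ‖x‖ ^ 2 + 2 * ((D⁻¹ * A) * (D⁻¹ * B)) * ⟪x, u⟫ +
        (D⁻¹ * B) ^ 2 * ‖u‖ ^ 2) = B ^ 2 / D := by
    clear_value D A B
    field_simp
    rw [hDdef, hAdef, hBdef]
    ring
  rw [hD2]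
  match_scalars
  · clear_value D A B
    field_simp
    rw [hDdef, hAdef, hBdef]
    ring
  · clear_value D A B
    field_simp
    exact hBdef.symm

set_option maxHeartbeats 4000000 in
theorem interpolation_on_geodesic
    (κ : ℝ) (hκ : κ < 0) (x y : E) (hx : inBall κ x) (hy : inBall κ y) (hxy : y ≠ x)
    (δ τ : ℝ) (hδ : 0 < δ) (hδτ : δ < τ) :
    dK κ x (expMap κ x ((δ / τ) • logMap κ x y)) +
      dK κ (expMap κ x ((δ / τ) • logMap κ x y)) y = dK κ x y := by
  have hx' : κ * ‖x‖ ^ 2 > -1 := hx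
  have hy' : κ * ‖y‖ ^ 2 > -1 := hy
  have hnegκ : (0:ℝ) < -κ := by linarith
  obtain ⟨c, hc⟩ : ∃ c, Real.sqrt (-κ) = c := ⟨_, rfl⟩
  have hcpos : 0 < c := hc ▸ Real.sqrt_pos.mpr hnegκ
  have hc2 : c ^ 2 = -κ := by rw [← hc]; exact Real.sq_sqrt (le_of_lt hnegκ)
  have hxb : 0 < 1 + κ * ‖x‖ ^ 2 := by linarith
  have hyb : 0 < 1 + κ * ‖y‖ ^ 2 := by linarith
  have hxball : κ * ‖(-x : E)‖ ^ 2 > -1 := by rw [norm_neg]; exact hx'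
  have hDxy : 0 < 1 - 2 * κ * ⟪-x, y⟫ + κ ^ 2 * ‖x‖ ^ 2 * ‖y‖ ^ 2 := by
    have := Dpos hκ hxball hy'
    rwa [norm_neg] at this
  obtain ⟨w, hw⟩ : ∃ w, mAdd κ (-x) y = w := ⟨_, rfl⟩
  have hwb : 0 < 1 + κ * ‖w‖ ^ 2 := by
    have h := one_add_mul_norm_mAdd_sq κ (-x) y (by rw [norm_neg]; exact ne_of_gt hDxy)
    rw [norm_neg, hw] at h
    rw [h]
    exact div_pos (mul_pos hxb hyb) hDxy
  have hwball : κ * ‖w‖ ^ 2 > -1 := by linarith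
  have hyw : mAdd κ x w = y := by
    have h := left_cancel κ (-x) y (by rw [norm_neg]; exact ne_of_gt hDxy)
      (by rw [norm_neg]; exact ne_of_gt hxb)
    rw [neg_neg, hw] at h
    exact h
  have hwne : w ≠ 0 := by
    intro h0
    apply hxy
    rw [← hyw, h0]
    simp [mAdd]
  have hwnorm : 0 < ‖w‖ := norm_pos_iff.mpr hwne
  obtain ⟨T, hT⟩ : ∃ T, c * ‖w‖ = T := ⟨_, rfl⟩
  have hT0 : 0 < T := by rw [← hT]; positivity
  have hT2 : T ^ 2 < 1 := by
    have e : T ^ 2 = -κ * ‖w‖ ^ 2 := by rw [← hT, mul_pow, hc2]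
    rw [e]; linarith
  have hT1 : T < 1 := by nlinarith
  have hτ : 0 < τ := lt_trans hδ hδτ
  have ht0 : 0 < δ / τ := div_pos hδ hτ
  have ht1 : δ / τ < 1 := (div_lt_one hτ).mpr hδτ
  obtain ⟨r, hr⟩ : ∃ r, _root_.artanh T = r := ⟨_, rfl⟩
  have hrpos : 0 < r := hr ▸ artanh_pos hT0 hT1
  obtain ⟨T₁, hT₁⟩ : ∃ T₁, Real.tanh (δ / τ * r) = T₁ := ⟨_, rfl⟩
  have hT₁0 : 0 < T₁ := hT₁ ▸ tanh_pos_of_pos (by positivity)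
  have hT₁T : T₁ < T := by
    rw [← hT₁]
    calc Real.tanh (δ / τ * r) < Real.tanh r := tanh_lt_tanh' (by nlinarith)
    _ = T := by rw [← hr]; exact tanh_artanh (by linarith) hT1
  have hTT₁ : T * T₁ < 1 := by nlinarith
  have hdpos : 0 < 1 - T * T₁ := by linarith
  obtain ⟨σ, hσdef⟩ : ∃ σ, T₁ / T = σ := ⟨_, rfl⟩
  have hσ0 : 0 < σ := by rw [← hσdef]; positivity
  have hσT : σ * T = T₁ := by rw [← hσdef]; field_simp
  have hσ1 : σ < 1 := by
    rw [← hσdef]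
    rw [div_lt_one hT0]
    exact hT₁T
  have hlampos : 0 < lam κ x := by rw [lam]; positivity
  have hlog : logMap κ x y = ((2 / (c * lam κ x)) * r * ‖w‖⁻¹) • w := by
    rw [logMap, hw, hc, hT, hr]
  obtain ⟨ρ, hρ⟩ : ∃ ρ, δ / τ * ((2 / (c * lam κ x)) * r * ‖w‖⁻¹) = ρ := ⟨_, rfl⟩
  have hρpos : 0 < ρ := by rw [← hρ]; positivity
  have hvval : (δ / τ) • logMap κ x y = ρ • w := by
    rw [hlog, smul_smul, hρ]
  have hvne : (δ / τ) • logMap κ x y ≠ 0 := by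
    rw [hvval]
    exact smul_ne_zero (ne_of_gt hρpos) hwne
  have hz0 : expMap κ x ((δ / τ) • logMap κ x y) = mAdd κ x (σ • w) := by
    rw [expMap, if_neg hvne, hvval, hc]
    congr 1
    rw [norm_smul, Real.norm_eq_abs, abs_of_pos hρpos, smul_smul]
    congr 1
    have harg : c * lam κ x * (ρ * ‖w‖) / 2 = δ / τ * r := by
      rw [← hρ, lam]
      field_simp
    rw [harg, hT₁, ← hσdef, ← hT]
    field_simp
  have hσwb : κ * ‖σ • w‖ ^ 2 > -1 := by
    rw [norm_smul, Real.norm_eq_abs, mul_pow, sq_abs]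
    have e : κ * (σ ^ 2 * ‖w‖ ^ 2) = -((σ * (c * ‖w‖)) ^ 2) := by
      linear_combination (σ ^ 2 * ‖w‖ ^ 2) * hc2
    rw [e, hT, hσT]
    nlinarith
  have hDz : 0 < 1 - 2 * κ * ⟪x, σ • w⟫ + κ ^ 2 * ‖x‖ ^ 2 * ‖σ • w‖ ^ 2 := Dpos hκ hx' hσwb
  have hxz : mAdd κ (-x) (mAdd κ x (σ • w)) = σ • w :=
    left_cancel κ x (σ • w) (ne_of_gt hDz) (ne_of_gt hxb)
  have his : ⟪x, σ • w⟫ = σ * ⟪x, w⟫ := real_inner_smul_right x w σ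
  have hns : ‖σ • w‖ ^ 2 = σ ^ 2 * ‖w‖ ^ 2 := by
    rw [norm_smul, mul_pow, Real.norm_eq_abs, sq_abs]
  have hDz' : 0 < 1 - 2 * κ * (σ * ⟪x, w⟫) + κ ^ 2 * ‖x‖ ^ 2 * (σ ^ 2 * ‖w‖ ^ 2) := by
    rw [his, hns] at hDz
    exact hDz
  have hDy : 0 < 1 - 2 * κ * ⟪x, w⟫ + κ ^ 2 * ‖x‖ ^ 2 * ‖w‖ ^ 2 := Dpos hκ hx' hwball
  have hzco : mAdd κ x (σ • w) =
      ((1 - 2 * κ * (σ * ⟪x, w⟫) + κ ^ 2 * ‖x‖ ^ 2 * (σ ^ 2 * ‖w‖ ^ 2))⁻¹ *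
          (1 - 2 * κ * (σ * ⟪x, w⟫) - κ * (σ ^ 2 * ‖w‖ ^ 2))) • x +
        (σ * ((1 - 2 * κ * (σ * ⟪x, w⟫) + κ ^ 2 * ‖x‖ ^ 2 * (σ ^ 2 * ‖w‖ ^ 2))⁻¹ *
          (1 + κ * ‖x‖ ^ 2))) • w := by
    rw [mAdd, his, hns]
    module
  have hyco : y =
      ((1 - 2 * κ * ⟪x, w⟫ + κ ^ 2 * ‖x‖ ^ 2 * ‖w‖ ^ 2)⁻¹ *
          (1 - 2 * κ * ⟪x, w⟫ - κ * ‖w‖ ^ 2)) • x +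
        ((1 - 2 * κ * ⟪x, w⟫ + κ ^ 2 * ‖x‖ ^ 2 * ‖w‖ ^ 2)⁻¹ * (1 + κ * ‖x‖ ^ 2)) • w := by
    rw [← hyw, mAdd]
    module
  have hκσ : 1 + κ * σ * ‖w‖ ^ 2 = 1 - T₁ * T := by
    rw [← hσT, ← hT]
    linear_combination (σ * ‖w‖ ^ 2) * hc2
  have hκσpos : 0 < 1 + κ * σ * ‖w‖ ^ 2 := by rw [hκσ]; linarith
  have hip : ⟪mAdd κ x (σ • w), y⟫ =
      ((1 - 2 * κ * (σ * ⟪x, w⟫) - κ * (σ ^ 2 * ‖w‖ ^ 2)) * (1 - 2 * κ * ⟪x, w⟫ - κ * ‖w‖ ^ 2) * ‖x‖ ^ 2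
        + ((1 - 2 * κ * (σ * ⟪x, w⟫) - κ * (σ ^ 2 * ‖w‖ ^ 2)) * (1 + κ * ‖x‖ ^ 2)
            + σ * (1 + κ * ‖x‖ ^ 2) * (1 - 2 * κ * ⟪x, w⟫ - κ * ‖w‖ ^ 2)) * ⟪x, w⟫
        + σ * (1 + κ * ‖x‖ ^ 2) * (1 + κ * ‖x‖ ^ 2) * ‖w‖ ^ 2) /
      ((1 - 2 * κ * (σ * ⟪x, w⟫) + κ ^ 2 * ‖x‖ ^ 2 * (σ ^ 2 * ‖w‖ ^ 2)) *
        (1 - 2 * κ * ⟪x, w⟫ + κ ^ 2 * ‖x‖ ^ 2 * ‖w‖ ^ 2)) := by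
    rw [hzco, hyco, inner_combo]
    field_simp
  have hnz : ‖mAdd κ x (σ • w)‖ ^ 2 =
      (‖x‖ ^ 2 + 2 * (σ * ⟪x, w⟫) + σ ^ 2 * ‖w‖ ^ 2) /
        (1 - 2 * κ * (σ * ⟪x, w⟫) + κ ^ 2 * ‖x‖ ^ 2 * (σ ^ 2 * ‖w‖ ^ 2)) := by
    rw [norm_mAdd_sq' κ x (σ • w) (ne_of_gt hDz), @norm_add_sq_real, his, hns]
  have hny : ‖y‖ ^ 2 =
      (‖x‖ ^ 2 + 2 * ⟪x, w⟫ + ‖w‖ ^ 2) /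
        (1 - 2 * κ * ⟪x, w⟫ + κ ^ 2 * ‖x‖ ^ 2 * ‖w‖ ^ 2) := by
    rw [← hyw, norm_mAdd_sq' κ x w (ne_of_gt hDy), @norm_add_sq_real]
  have hE : 1 - 2 * κ * ⟪-(mAdd κ x (σ • w)), y⟫ +
      κ ^ 2 * ‖-(mAdd κ x (σ • w))‖ ^ 2 * ‖y‖ ^ 2 =
      (1 + κ * ‖x‖ ^ 2) ^ 2 * (1 + κ * σ * ‖w‖ ^ 2) ^ 2 /
        ((1 - 2 * κ * (σ * ⟪x, w⟫) + κ ^ 2 * ‖x‖ ^ 2 * (σ ^ 2 * ‖w‖ ^ 2)) *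
          (1 - 2 * κ * ⟪x, w⟫ + κ ^ 2 * ‖x‖ ^ 2 * ‖w‖ ^ 2)) := by
    rw [inner_neg_left, norm_neg, hip, hnz, hny]
    have hD1 := hDz'.ne'
    have hD2 := hDy.ne'
    generalize hG1 : 1 - 2 * κ * (σ * ⟪x, w⟫) + κ ^ 2 * ‖x‖ ^ 2 * (σ ^ 2 * ‖w‖ ^ 2) = D1 at hD1 ⊢
    generalize hG2 : 1 - 2 * κ * ⟪x, w⟫ + κ ^ 2 * ‖x‖ ^ 2 * ‖w‖ ^ 2 = D2 at hD2 ⊢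
    field_simp
    rw [← hG1, ← hG2]
    ring
  have hEpos : 0 < (1 + κ * ‖x‖ ^ 2) ^ 2 * (1 + κ * σ * ‖w‖ ^ 2) ^ 2 /
        ((1 - 2 * κ * (σ * ⟪x, w⟫) + κ ^ 2 * ‖x‖ ^ 2 * (σ ^ 2 * ‖w‖ ^ 2)) *
          (1 - 2 * κ * ⟪x, w⟫ + κ ^ 2 * ‖x‖ ^ 2 * ‖w‖ ^ 2)) := by
    apply div_pos
    · exact mul_pos (pow_pos hxb 2) (pow_pos hκσpos 2)
    · exact mul_pos hDz' hDy
  have hSub : ‖-(mAdd κ x (σ • w)) + y‖ ^ 2 =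
      (1 - σ) ^ 2 * ‖w‖ ^ 2 * (1 + κ * ‖x‖ ^ 2) ^ 2 /
        ((1 - 2 * κ * (σ * ⟪x, w⟫) + κ ^ 2 * ‖x‖ ^ 2 * (σ ^ 2 * ‖w‖ ^ 2)) *
          (1 - 2 * κ * ⟪x, w⟫ + κ ^ 2 * ‖x‖ ^ 2 * ‖w‖ ^ 2)) := by
    rw [@norm_add_sq_real, inner_neg_left, norm_neg, hip, hnz, hny]
    have hD1 := hDz'.ne'
    have hD2 := hDy.ne'
    generalize hG1 : 1 - 2 * κ * (σ * ⟪x, w⟫) + κ ^ 2 * ‖x‖ ^ 2 * (σ ^ 2 * ‖w‖ ^ 2) = D1 at hD1 ⊢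
    generalize hG2 : 1 - 2 * κ * ⟪x, w⟫ + κ ^ 2 * ‖x‖ ^ 2 * ‖w‖ ^ 2 = D2 at hD2 ⊢
    field_simp
    rw [← hG1, ← hG2]
    ring
  have hnormz : ‖mAdd κ (-(mAdd κ x (σ • w))) y‖ ^ 2 =
      (1 - σ) ^ 2 * ‖w‖ ^ 2 / (1 + κ * σ * ‖w‖ ^ 2) ^ 2 := by
    rw [norm_mAdd_sq' κ (-(mAdd κ x (σ • w))) y (by rw [hE]; exact ne_of_gt hEpos)]
    rw [hE, hSub]
    rw [div_div_div_cancel_right₀]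
    · rw [div_eq_div_iff (by positivity) (by positivity)]
      ring
    · exact ne_of_gt (mul_pos hDz' hDy)
  have hTsub : T - T₁ = c * ‖w‖ * (1 - σ) := by
    rw [← hσT, ← hT]; ring
  have hnzy : c * ‖mAdd κ (-(mAdd κ x (σ • w))) y‖ = (T - T₁) / (1 - T * T₁) := by
    have h1 : 0 ≤ (T - T₁) / (1 - T * T₁) := div_nonneg (by linarith) (by linarith)
    have h3 : 0 ≤ c * ‖mAdd κ (-(mAdd κ x (σ • w))) y‖ := by positivity
    have h2 : (c * ‖mAdd κ (-(mAdd κ x (σ • w))) y‖) ^ 2 = ((T - T₁) / (1 - T * T₁)) ^ 2 := by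
      rw [mul_pow, hnormz, hκσ, hTsub]
      have hne2 : (1 : ℝ) - T * T₁ ≠ 0 := ne_of_gt hdpos
      have hne1 : (1 : ℝ) - T₁ * T ≠ 0 := by rw [mul_comm T₁ T]; exact hne2
      field_simp
    rw [← Real.sqrt_sq h3, ← Real.sqrt_sq h1, h2]
  have hnσw : c * ‖σ • w‖ = T₁ := by
    rw [norm_smul, Real.norm_eq_abs, abs_of_pos hσ0, ← hσT, ← hT]
    ring
  rw [hz0, dK, dK, dK, hc, hw, hxz, hnσw, hnzy, hT]
  rw [← mul_add]
  congr 1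
  exact artanh_sum hT1 (le_of_lt hT₁0) (le_of_lt hT₁T)
end

section
/- Let κ < 0 and let x, y be points of the Poincaré ball of curvature κ. Then x ⊕κ y is again in the Poincaré ball of curvature κ, i.e. κ·‖x ⊕κ y‖² > −1. -/
open Real Filter

open scoped RealInnerProductSpace

variable {E : Type*} [NormedAddCommGroup E] [InnerProductSpace ℝ E]

theorem mobius_add_mem_ball
    (κ : ℝ) (hκ : κ < 0) (x y : E) (hx : inBall κ x) (hy : inBall κ y) :
    inBall κ (mAdd κ x y) := by
  have hx' : κ * ‖x‖ ^ 2 > -1 := hx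
  have hy' : κ * ‖y‖ ^ 2 > -1 := hy
  set a := ‖x‖ ^ 2 with ha
  set b := ‖y‖ ^ 2 with hb
  set t := ⟪x, y⟫ with ht
  have hCS : t ^ 2 ≤ a * b := by
    have := abs_real_inner_le_norm x y
    nlinarith [abs_nonneg t, sq_abs t, norm_nonneg x, norm_nonneg y]
  have hxy : 1 + κ * (‖x‖ * ‖y‖) > 0 := by
    nlinarith [norm_nonneg x, norm_nonneg y, sq_nonneg (‖x‖ - ‖y‖), mul_nonneg (norm_nonneg x) (norm_nonneg y)]
  set D := 1 - 2 * κ * t + κ ^ 2 * a * b with hD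
  have hab : a * b = (‖x‖ * ‖y‖) ^ 2 := by rw [ha, hb]; ring
  have hDpos : 0 < D := by
    have h1 : |t| ≤ ‖x‖ * ‖y‖ := abs_real_inner_le_norm x y
    have h2 : -(‖x‖ * ‖y‖) ≤ t := by linarith [neg_abs_le t]
    nlinarith [sq_nonneg (1 + κ * (‖x‖ * ‖y‖)), mul_nonneg (norm_nonneg x) (norm_nonneg y)]
  set α := 1 - 2 * κ * t - κ * b with hα
  set β := 1 + κ * a with hβ
  have hS : ‖α • x + β • y‖ ^ 2 = α ^ 2 * a + 2 * (α * β) * t + β ^ 2 * b := by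
    rw [@norm_add_sq_real, real_inner_smul_left, real_inner_smul_right,
      norm_smul, norm_smul, mul_pow, mul_pow]
    simp only [Real.norm_eq_abs, sq_abs]
    rw [← ht, ← ha, ← hb]
    ring
  have hnorm : ‖mAdd κ x y‖ ^ 2 = D⁻¹ ^ 2 * (α ^ 2 * a + 2 * (α * β) * t + β ^ 2 * b) := by
    rw [mAdd, norm_smul, mul_pow]
    simp only [Real.norm_eq_abs, sq_abs]
    rw [← ht, ← ha, ← hb, ← hD, ← hα, ← hβ, hS]
  set S := α ^ 2 * a + 2 * (α * β) * t + β ^ 2 * b with hSdef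
  have hkey : D ^ 2 + κ * S = D * (1 + κ * a) * (1 + κ * b) := by
    rw [hSdef, hα, hβ, hD]; ring
  have hSpos : 0 < D ^ 2 + κ * S := by
    rw [hkey]
    have : 0 < 1 + κ * a := by linarith
    have : 0 < 1 + κ * b := by linarith
    positivity
  have hfin : κ * ‖mAdd κ x y‖ ^ 2 - (-1) = (D ^ 2 + κ * S) * (D ^ 2)⁻¹ := by
    rw [hnorm]
    field_simp
    ring
  show κ * ‖mAdd κ x y‖ ^ 2 > -1
  have : 0 < (D ^ 2 + κ * S) * (D ^ 2)⁻¹ := by positivity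
  linarith [hfin ▸ this]
end

section
/- (The exponential and logarithmic maps are mutually inverse, direction 2.) Let κ < 0, let x be a point of the Poincaré ball of curvature κ, and let v ≠ 0 be a vector. Then exp^κ_x(v) ≠ x and log^κ_x(exp^κ_x(v)) = v. -/
open Real Filter

open scoped RealInnerProductSpace

variable {E : Type*} [NormedAddCommGroup E] [InnerProductSpace ℝ E]

lemma my_artanh_tanh (t : ℝ) : _root_.artanh (Real.tanh t) = t := by
  have h1 : Real.cosh t - Real.sinh t ≠ 0 := by
    rw [Real.cosh_sub_sinh]; positivity
  have h2 : Real.cosh t ≠ 0 := ne_of_gt (Real.cosh_pos t)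
  have key : (1 + Real.tanh t) / (1 - Real.tanh t) = Real.exp (2 * t) := by
    rw [Real.tanh_eq_sinh_div_cosh]
    have h3 : (1 + Real.sinh t / Real.cosh t) / (1 - Real.sinh t / Real.cosh t)
        = (Real.cosh t + Real.sinh t) / (Real.cosh t - Real.sinh t) := by
      field_simp
    rw [h3, Real.cosh_add_sinh, Real.cosh_sub_sinh, ← Real.exp_sub]
    ring_nf
  rw [_root_.artanh, key, Real.log_exp]; ring

lemma tanh_pos' {t : ℝ} (ht : 0 < t) : 0 < Real.tanh t := by
  rw [Real.tanh_eq_sinh_div_cosh]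
  have : 0 < Real.sinh t := by rwa [Real.sinh_pos_iff]
  exact div_pos this (Real.cosh_pos t)

lemma tanh_lt_one' (t : ℝ) : Real.tanh t < 1 := by
  rw [Real.tanh_eq_sinh_div_cosh, div_lt_one (Real.cosh_pos t)]
  nlinarith [Real.cosh_sub_sinh t, Real.exp_pos (-t)]

lemma mAdd_cancel (κ : ℝ) (hκ : κ < 0) (x w : E)
    (hx : 0 < 1 + κ * ‖x‖ ^ 2) (hw : 0 < 1 + κ * ‖w‖ ^ 2) :
    mAdd κ (-x) (mAdd κ x w) = w := by
  have hcs := abs_real_inner_le_norm x w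
  have hp1 : -(‖x‖ * ‖w‖) ≤ ⟪x, w⟫ := neg_le_of_abs_le hcs
  have h1 : 0 < 1 + κ * (‖x‖ * ‖w‖) := by
    nlinarith [mul_nonneg (le_of_lt (neg_pos.2 hκ)) (sq_nonneg (‖x‖ - ‖w‖))]
  have hD : 0 < 1 - 2 * κ * ⟪x, w⟫ + κ ^ 2 * ‖x‖ ^ 2 * ‖w‖ ^ 2 := by
    nlinarith [sq_nonneg (1 + κ * (‖x‖ * ‖w‖)),
      mul_nonneg (le_of_lt (neg_pos.2 hκ)) (by linarith : (0:ℝ) ≤ ⟪x, w⟫ + ‖x‖ * ‖w‖)]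
  have hDne : (1 - 2 * κ * ⟪x, w⟫ + κ ^ 2 * ‖x‖ ^ 2 * ‖w‖ ^ 2) ≠ 0 := ne_of_gt hD
  have hBne : (1 + κ * ‖x‖ ^ 2) ≠ 0 := ne_of_gt hx
  have hy : mAdd κ x w = (1 - 2 * κ * ⟪x, w⟫ + κ ^ 2 * ‖x‖ ^ 2 * ‖w‖ ^ 2)⁻¹ •
      ((1 - 2 * κ * ⟪x, w⟫ - κ * ‖w‖ ^ 2) • x + (1 + κ * ‖x‖ ^ 2) • w) := rfl
  have hq : ⟪-x, mAdd κ x w⟫ = -((1 - 2 * κ * ⟪x, w⟫ + κ ^ 2 * ‖x‖ ^ 2 * ‖w‖ ^ 2)⁻¹ *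
      ((1 - 2 * κ * ⟪x, w⟫ - κ * ‖w‖ ^ 2) * ‖x‖ ^ 2 + (1 + κ * ‖x‖ ^ 2) * ⟪x, w⟫)) := by
    rw [hy]
    simp [inner_add_right, inner_smul_right, inner_neg_left, real_inner_self_eq_norm_sq]
    ring
  have hn : ‖mAdd κ x w‖ ^ 2
      = ((1 - 2 * κ * ⟪x, w⟫ + κ ^ 2 * ‖x‖ ^ 2 * ‖w‖ ^ 2)⁻¹) ^ 2 *
        ((1 - 2 * κ * ⟪x, w⟫ - κ * ‖w‖ ^ 2) ^ 2 * ‖x‖ ^ 2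
          + 2 * ((1 - 2 * κ * ⟪x, w⟫ - κ * ‖w‖ ^ 2) * (1 + κ * ‖x‖ ^ 2)) * ⟪x, w⟫
          + (1 + κ * ‖x‖ ^ 2) ^ 2 * ‖w‖ ^ 2) := by
    rw [hy, norm_smul, mul_pow, Real.norm_eq_abs, sq_abs, norm_add_sq_real,
      norm_smul, norm_smul, real_inner_smul_left, real_inner_smul_right,
      Real.norm_eq_abs, Real.norm_eq_abs, mul_pow, mul_pow, sq_abs, sq_abs]
    ring
  have goal_eq : mAdd κ (-x) (mAdd κ x w)
      = (1 - 2 * κ * ⟪-x, mAdd κ x w⟫ + κ ^ 2 * ‖-x‖ ^ 2 * ‖mAdd κ x w‖ ^ 2)⁻¹ •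
        ((1 - 2 * κ * ⟪-x, mAdd κ x w⟫ - κ * ‖mAdd κ x w‖ ^ 2) • (-x)
          + (1 + κ * ‖-x‖ ^ 2) • mAdd κ x w) := rfl
  rw [goal_eq, hq, hn, norm_neg, hy]
  have hE : 1 - 2 * κ * -((1 - 2 * κ * ⟪x, w⟫ + κ ^ 2 * ‖x‖ ^ 2 * ‖w‖ ^ 2)⁻¹ *
      ((1 - 2 * κ * ⟪x, w⟫ - κ * ‖w‖ ^ 2) * ‖x‖ ^ 2 + (1 + κ * ‖x‖ ^ 2) * ⟪x, w⟫))
      + κ ^ 2 * ‖x‖ ^ 2 * (((1 - 2 * κ * ⟪x, w⟫ + κ ^ 2 * ‖x‖ ^ 2 * ‖w‖ ^ 2)⁻¹) ^ 2 *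
        ((1 - 2 * κ * ⟪x, w⟫ - κ * ‖w‖ ^ 2) ^ 2 * ‖x‖ ^ 2
          + 2 * ((1 - 2 * κ * ⟪x, w⟫ - κ * ‖w‖ ^ 2) * (1 + κ * ‖x‖ ^ 2)) * ⟪x, w⟫
          + (1 + κ * ‖x‖ ^ 2) ^ 2 * ‖w‖ ^ 2))
      = (1 + κ * ‖x‖ ^ 2) ^ 2 / (1 - 2 * κ * ⟪x, w⟫ + κ ^ 2 * ‖x‖ ^ 2 * ‖w‖ ^ 2) := by
    field_simp
    ring
  rw [hE]
  set D := (1 - 2 * κ * ⟪x, w⟫ + κ ^ 2 * ‖x‖ ^ 2 * ‖w‖ ^ 2) with hDdef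
  have hD2 : D ≠ 0 := by convert hDne using 1
  match_scalars
  · field_simp
    rw [hDdef]
    ring
  · field_simp

lemma mAdd_neg_self (κ : ℝ) (x : E) : mAdd κ (-x) x = 0 := by
  have : mAdd κ (-x) x
      = (1 - 2 * κ * ⟪-x, x⟫ + κ ^ 2 * ‖-x‖ ^ 2 * ‖x‖ ^ 2)⁻¹ •
        ((1 - 2 * κ * ⟪-x, x⟫ - κ * ‖x‖ ^ 2) • (-x) + (1 + κ * ‖-x‖ ^ 2) • x) := rfl
  rw [this, inner_neg_left, real_inner_self_eq_norm_sq, norm_neg]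
  match_scalars
  ring

theorem logMap_expMap
    (κ : ℝ) (hκ : κ < 0) (x : E) (hx : inBall κ x) (v : E) (hv : v ≠ 0) :
    expMap κ x v ≠ x ∧ logMap κ x (expMap κ x v) = v := by
  have hc : 0 < Real.sqrt (-κ) := Real.sqrt_pos.2 (by linarith)
  have hc2 : Real.sqrt (-κ) ^ 2 = -κ := Real.sq_sqrt (by linarith)
  have hvn : 0 < ‖v‖ := norm_pos_iff.2 hv
  have hB : 0 < 1 + κ * ‖x‖ ^ 2 := by unfold inBall at hx; linarith
  have hlam : 0 < lam κ x := div_pos two_pos hB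
  set c := Real.sqrt (-κ) with hcdef
  set t := c * lam κ x * ‖v‖ / 2 with ht
  have htpos : 0 < t := by
    rw [ht]; positivity
  have hs : 0 < Real.tanh t := tanh_pos' htpos
  have hs1 : Real.tanh t < 1 := tanh_lt_one' t
  set w : E := (Real.tanh t / (c * ‖v‖)) • v with hw
  have hexp : expMap κ x v = mAdd κ x w := by rw [expMap, if_neg hv]
  have hwnorm : ‖w‖ = Real.tanh t / c := by
    rw [hw, norm_smul, Real.norm_eq_abs, abs_of_pos (by positivity)]
    field_simp
  have hw0 : w ≠ 0 := smul_ne_zero (by positivity) hv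
  have hBw : 0 < 1 + κ * ‖w‖ ^ 2 := by
    rw [hwnorm]
    have hκc : κ = -c ^ 2 := by rw [hc2]; ring
    rw [hκc, div_pow]
    have : -c ^ 2 * (Real.tanh t ^ 2 / c ^ 2) = -Real.tanh t ^ 2 := by
      field_simp
    rw [this]
    nlinarith
  have hcan := mAdd_cancel κ hκ x w hB hBw
  constructor
  · rw [hexp]
    intro h
    rw [h, mAdd_neg_self] at hcan
    exact hw0 hcan.symm
  · rw [logMap, hexp, hcan, hwnorm]
    have h1 : c * (Real.tanh t / c) = Real.tanh t := mul_div_cancel₀ _ (ne_of_gt hc)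
    rw [h1, my_artanh_tanh, hw, smul_smul]
    have h2 : 2 / (c * lam κ x) * t * (Real.tanh t / c)⁻¹ * (Real.tanh t / (c * ‖v‖)) = 1 := by
      field_simp
      rw [ht]
      field_simp
    rw [h2, one_smul]
end

section
/- (Möbius scalar multiplication via the tangent space at the origin, Eq. (14) of the paper.) Let κ < 0, let x ≠ 0 be a point of the Poincaré ball of curvature κ, and let r > 0. Then r ⊗κ x = exp^κ_0(r · log^κ_0(x)), where 0 denotes the origin of the ball. -/
open Real Filter

open scoped RealInnerProductSpace

variable {E : Type*} [NormedAddCommGroup E] [InnerProductSpace ℝ E]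

lemma mAdd_zero_left (κ : ℝ) (y : E) : mAdd κ (0 : E) y = y := by
  simp [mAdd]

theorem mobius_smul_via_tangent_at_origin
    (κ : ℝ) (hκ : κ < 0) (x : E) (hx0 : x ≠ 0) (hx : inBall κ x) (r : ℝ) (hr : 0 < r) :
    mSmul κ r x = expMap κ (0 : E) (r • logMap κ (0 : E) x) := by
  have hκ' : 0 < -κ := by linarith
  have hcpos : 0 < Real.sqrt (-κ) := Real.sqrt_pos.2 hκ'
  set c := Real.sqrt (-κ) with hcdef
  have hc2 : c ^ 2 = -κ := Real.sq_sqrt hκ'.le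
  have hxn : 0 < ‖x‖ := norm_pos_iff.2 hx0
  have hcx : 0 < c * ‖x‖ := mul_pos hcpos hxn
  have ht1 : c * ‖x‖ < 1 := by
    have hsq : (c * ‖x‖) ^ 2 < 1 := by
      have : κ * ‖x‖ ^ 2 > -1 := hx
      nlinarith
    nlinarith
  set t := _root_.artanh (c * ‖x‖) with htdef
  have hart : 0 < t := by
    have h1 : (1 : ℝ) < (1 + c * ‖x‖) / (1 - c * ‖x‖) := by
      rw [lt_div_iff₀ (by linarith)]; nlinarith
    have := Real.log_pos h1
    unfold t
    unfold _root_.artanh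
    linarith
  have hlam0 : lam κ (0 : E) = 2 := by simp [lam]
  have hlog : logMap κ (0 : E) x = (c⁻¹ * t * ‖x‖⁻¹) • x := by
    rw [logMap, neg_zero, mAdd_zero_left, hlam0]
    congr 1
    rw [← hcdef, ← htdef]
    field_simp
  set a : ℝ := r * (c⁻¹ * t * ‖x‖⁻¹) with hadef
  have hapos : 0 < a := by positivity
  have hrs : r • logMap κ (0 : E) x = a • x := by
    rw [hlog, smul_smul]
  have hnv : ‖a • x‖ = r * t / c := by
    rw [norm_smul, Real.norm_eq_abs, abs_of_pos hapos, hadef]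
    field_simp
  have hvne : a • x ≠ 0 := smul_ne_zero (ne_of_gt hapos) hx0
  rw [hrs, expMap, if_neg hvne, mAdd_zero_left, hlam0, hnv, smul_smul,
    mSmul, if_neg hx0]
  congr 1
  rw [← hcdef, ← htdef]
  have harg : c * 2 * (r * t / c) / 2 = r * t := by field_simp
  rw [harg, hadef]
  field_simp
end

section
/- (The exponential map recovers translation in the flat limit, so that hyperbolic explicit Euler converges to Euclidean explicit Euler.) Fix a point x and a vector v ≠ 0 of a real inner product space. Then the map κ ↦ exp^κ_x(v) tends to x + v as κ → 0 from the left (κ → 0⁻ along negative reals). -/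
open Real Filter

open scoped RealInnerProductSpace

variable {E : Type*} [NormedAddCommGroup E] [InnerProductSpace ℝ E]

/-- `tanh t / t → 1` as `t → 0` (punctured). -/
lemma tendsto_tanh_div : Tendsto (fun t : ℝ => Real.tanh t / t) (nhdsWithin 0 {(0:ℝ)}ᶜ) (nhds 1) := by
  have hs : Tendsto (fun t : ℝ => Real.sinh t / t) (nhdsWithin 0 {(0:ℝ)}ᶜ) (nhds 1) := by
    have h := (Real.hasDerivAt_sinh 0)
    rw [hasDerivAt_iff_tendsto_slope] at h
    rw [Real.cosh_zero] at h
    exact h.congr fun t => by simp [slope_fun_def, Real.sinh_zero, div_eq_inv_mul]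
  have hc : Tendsto (fun t : ℝ => (Real.cosh t)⁻¹) (nhdsWithin 0 {(0:ℝ)}ᶜ) (nhds 1) := by
    have : ContinuousAt (fun t : ℝ => (Real.cosh t)⁻¹) 0 :=
      (Real.continuous_cosh.continuousAt).inv₀ (by simp [Real.cosh_zero])
    simpa [Real.cosh_zero] using this.continuousWithinAt.tendsto
  have := hs.mul hc
  simp only [one_mul] at this
  refine this.congr (fun t => ?_)
  rw [Real.tanh_eq_sinh_div_cosh]
  field_simp

set_option maxHeartbeats 1000000 in
theorem expMap_flat_limit (x v : E) (hv : v ≠ 0) :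
    Tendsto (fun κ : ℝ => expMap κ x v) (nhdsWithin 0 (Set.Iio 0)) (nhds (x + v)) := by
  classical
  have hvn : (0:ℝ) < ‖v‖ := norm_pos_iff.mpr hv
  set a : ℝ → ℝ := fun κ => Real.sqrt (-κ) * lam κ x * ‖v‖ / 2 with ha
  set s : ℝ → ℝ := fun κ => Real.tanh (a κ) / (Real.sqrt (-κ) * ‖v‖) with hs
  -- eventually facts on the filter
  have hlampos : ∀ᶠ κ in nhdsWithin (0:ℝ) (Set.Iio 0), 0 < 1 + κ * ‖x‖ ^ 2 := by
    have hcont : Tendsto (fun κ : ℝ => 1 + κ * ‖x‖ ^ 2) (nhdsWithin 0 (Set.Iio 0)) (nhds 1) := by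
      have : ContinuousAt (fun κ : ℝ => 1 + κ * ‖x‖ ^ 2) 0 := by fun_prop
      simpa using this.continuousWithinAt.tendsto
    exact hcont.eventually (eventually_gt_nhds one_pos)
  have hneg : ∀ᶠ κ in nhdsWithin (0:ℝ) (Set.Iio 0), κ < 0 :=
    eventually_mem_nhdsWithin.mono fun κ hκ => hκ
  have hapos : ∀ᶠ κ in nhdsWithin (0:ℝ) (Set.Iio 0), 0 < a κ := by
    filter_upwards [hlampos, hneg] with κ h1 h2
    have hsq : 0 < Real.sqrt (-κ) := Real.sqrt_pos.mpr (by linarith)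
    have hlam : 0 < lam κ x := div_pos two_pos h1
    positivity
  -- a tends to 0
  have hsqrt : Tendsto (fun κ : ℝ => Real.sqrt (-κ)) (nhdsWithin 0 (Set.Iio 0)) (nhds 0) := by
    have : ContinuousAt (fun κ : ℝ => Real.sqrt (-κ)) 0 :=
      (Real.continuous_sqrt.comp continuous_neg).continuousAt
    simpa using this.continuousWithinAt.tendsto
  have hlamt : Tendsto (fun κ : ℝ => lam κ x) (nhdsWithin 0 (Set.Iio 0)) (nhds 2) := by
    have : ContinuousAt (fun κ : ℝ => lam κ x) 0 := by
      unfold lam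
      apply ContinuousAt.div (by fun_prop) (by fun_prop)
      simp
    simpa [lam] using this.continuousWithinAt.tendsto
  have hat : Tendsto a (nhdsWithin 0 (Set.Iio 0)) (nhds 0) := by
    have := (hsqrt.mul hlamt).mul_const (‖v‖ / 2)
    simpa [ha, mul_div_assoc] using this
  have hat' : Tendsto a (nhdsWithin 0 (Set.Iio 0)) (nhdsWithin 0 {(0:ℝ)}ᶜ) := by
    refine tendsto_nhdsWithin_iff.mpr ⟨hat, ?_⟩
    filter_upwards [hapos] with κ h using ne_of_gt h
  -- s tends to 1
  have hst : Tendsto s (nhdsWithin 0 (Set.Iio 0)) (nhds 1) := by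
    have h1 : Tendsto (fun κ => Real.tanh (a κ) / a κ) (nhdsWithin 0 (Set.Iio 0)) (nhds 1) :=
      tendsto_tanh_div.comp hat'
    have h2 : Tendsto (fun κ => lam κ x / 2) (nhdsWithin 0 (Set.Iio 0)) (nhds 1) := by
      simpa using hlamt.div_const 2
    have := h1.mul h2
    rw [one_mul] at this
    refine this.congr' ?_
    filter_upwards [hapos, hneg, hlampos] with κ hκa hκn hκl
    have hsq : 0 < Real.sqrt (-κ) := Real.sqrt_pos.mpr (by linarith)
    have hκa' : a κ ≠ 0 := ne_of_gt hκa
    have hlamne : lam κ x ≠ 0 := ne_of_gt (div_pos two_pos hκl)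
    rw [hs]
    simp only [ha] at hκa' ⊢
    field_simp
  -- continuity of the Möbius addition part
  have hF : ContinuousAt (fun p : ℝ × ℝ => mAdd p.1 x (p.2 • v)) (0, 1) := by
    unfold mAdd
    have hinner : Continuous fun p : ℝ × ℝ => ⟪x, p.2 • v⟫ := by
      exact continuous_const.inner (continuous_snd.smul continuous_const)
    have hnorm : Continuous fun p : ℝ × ℝ => ‖p.2 • v‖ := by
      exact (continuous_snd.smul continuous_const).norm
    have hden : Continuous fun p : ℝ × ℝ =>
        1 - 2 * p.1 * ⟪x, p.2 • v⟫ + p.1 ^ 2 * ‖x‖ ^ 2 * ‖p.2 • v‖ ^ 2 :=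
      (continuous_const.sub ((continuous_const.mul continuous_fst).mul hinner)).add
        (((continuous_fst.pow 2).mul continuous_const).mul (hnorm.pow 2))
    have hnum : Continuous fun p : ℝ × ℝ =>
        (1 - 2 * p.1 * ⟪x, p.2 • v⟫ - p.1 * ‖p.2 • v‖ ^ 2) • x
          + (1 + p.1 * ‖x‖ ^ 2) • (p.2 • v) :=
      (((continuous_const.sub ((continuous_const.mul continuous_fst).mul hinner)).sub
          (continuous_fst.mul (hnorm.pow 2))).smul continuous_const).add
        ((continuous_const.add (continuous_fst.mul continuous_const)).smul
          (continuous_snd.smul continuous_const))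
    exact (hden.continuousAt.inv₀ (by simp)).smul hnum.continuousAt
  have hcomp : Tendsto (fun κ : ℝ => mAdd κ x (s κ • v)) (nhdsWithin 0 (Set.Iio 0))
      (nhds (mAdd 0 x ((1:ℝ) • v))) := by
    have hpair : Tendsto (fun κ : ℝ => ((κ, s κ) : ℝ × ℝ)) (nhdsWithin 0 (Set.Iio 0))
        (nhds ((0:ℝ), (1:ℝ))) := by
      refine Tendsto.prodMk_nhds ?_ hst
      exact nhdsWithin_le_nhds
    exact hF.tendsto.comp hpair
  have hval : mAdd (0:ℝ) x ((1:ℝ) • v) = x + v := by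
    simp [mAdd]
  rw [hval] at hcomp
  refine hcomp.congr (fun κ => ?_)
  simp [expMap, hv, hs, ha, mul_div_assoc]
end

section
/- (The logarithmic map recovers the Euclidean gradient/difference in the flat limit.) Fix points x ≠ y of a real inner product space. Then the map κ ↦ log^κ_x(y) tends to y − x as κ → 0 from the left (κ → 0⁻ along negative reals). -/
open Real Filter

open scoped RealInnerProductSpace

variable {E : Type*} [NormedAddCommGroup E] [InnerProductSpace ℝ E]

lemma artanh_zero : _root_.artanh 0 = 0 := by simp [_root_.artanh]

lemma hasDerivAt_artanh_zero : HasDerivAt _root_.artanh 1 0 := by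
  have h1 : HasDerivAt (fun t : ℝ => Real.log (1 + t)) 1 0 := by
    have hin : HasDerivAt (fun t : ℝ => 1 + t) 1 0 := (hasDerivAt_id 0).const_add 1
    have := (Real.hasDerivAt_log (by norm_num : (1:ℝ) + 0 ≠ 0)).comp 0 hin
    simpa [Function.comp_def] using this
  have h2 : HasDerivAt (fun t : ℝ => Real.log (1 - t)) (-1) 0 := by
    have hin : HasDerivAt (fun t : ℝ => 1 - t) (-1) 0 := (hasDerivAt_id 0).const_sub 1
    have := (Real.hasDerivAt_log (by norm_num : (1:ℝ) - 0 ≠ 0)).comp 0 hin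
    simpa [Function.comp_def] using this
  have h3 : HasDerivAt (fun t : ℝ => (1/2 : ℝ) * (Real.log (1 + t) - Real.log (1 - t))) 1 0 := by
    have := (h1.sub h2).const_mul (1/2 : ℝ)
    norm_num at this
    simpa using this
  have heq : (fun t : ℝ => (1/2 : ℝ) * (Real.log (1 + t) - Real.log (1 - t))) =ᶠ[nhds 0] _root_.artanh := by
    have hmem : Set.Ioo (-1 : ℝ) 1 ∈ nhds (0 : ℝ) := isOpen_Ioo.mem_nhds (by norm_num)
    filter_upwards [hmem] with t ht
    have h1 : (1 : ℝ) + t ≠ 0 := by nlinarith [ht.1, ht.2]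
    have h2 : (1 : ℝ) - t ≠ 0 := by nlinarith [ht.1, ht.2]
    simp [_root_.artanh, Real.log_div h1 h2]
  exact h3.congr_of_eventuallyEq heq.symm

lemma tendsto_artanh_div : Tendsto (fun t : ℝ => _root_.artanh t / t) (nhdsWithin 0 {0}ᶜ) (nhds 1) := by
  have := hasDerivAt_iff_tendsto_slope.mp hasDerivAt_artanh_zero
  refine this.congr fun t => ?_
  simp [slope, _root_.artanh_zero, div_eq_inv_mul]

theorem logMap_flat_limit (x y : E) (hxy : x ≠ y) :
    Tendsto (fun κ : ℝ => logMap κ x y) (nhdsWithin 0 (Set.Iio 0)) (nhds (y - x)) := by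
  have hyx : y - x ≠ 0 := sub_ne_zero.mpr (Ne.symm hxy)
  -- mAdd tends to y - x
  have hm : Tendsto (fun κ : ℝ => mAdd κ (-x) y) (nhds 0) (nhds (y - x)) := by
    have hden : Tendsto (fun κ : ℝ => (1 - 2 * κ * ⟪-x, y⟫ + κ ^ 2 * ‖-x‖ ^ 2 * ‖y‖ ^ 2)⁻¹)
        (nhds 0) (nhds 1) := by
      have hc : Tendsto (fun κ : ℝ => 1 - 2 * κ * ⟪-x, y⟫ + κ ^ 2 * ‖-x‖ ^ 2 * ‖y‖ ^ 2)
          (nhds 0) (nhds 1) := by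
        have hc : Continuous fun κ : ℝ => 1 - 2 * κ * ⟪-x, y⟫ + κ ^ 2 * ‖-x‖ ^ 2 * ‖y‖ ^ 2 := by
          continuity
        convert hc.tendsto 0 using 2
        norm_num
      simpa using hc.inv₀ one_ne_zero
    have hs1 : Tendsto (fun κ : ℝ => (1 - 2 * κ * ⟪-x, y⟫ - κ * ‖y‖ ^ 2)) (nhds 0) (nhds 1) := by
      have hc : Continuous fun κ : ℝ => 1 - 2 * κ * ⟪-x, y⟫ - κ * ‖y‖ ^ 2 := by continuity
      convert hc.tendsto 0 using 2
      norm_num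
    have hs2 : Tendsto (fun κ : ℝ => (1 + κ * ‖-x‖ ^ 2)) (nhds 0) (nhds 1) := by
      have hc : Continuous fun κ : ℝ => 1 + κ * ‖-x‖ ^ 2 := by continuity
      convert hc.tendsto 0 using 2
      norm_num
    have hvec : Tendsto (fun κ : ℝ => (1 - 2 * κ * ⟪-x, y⟫ - κ * ‖y‖ ^ 2) • (-x)
        + (1 + κ * ‖-x‖ ^ 2) • y) (nhds 0) (nhds (-x + y)) := by
      have := (hs1.smul (tendsto_const_nhds (x := -x))).add
        (hs2.smul (tendsto_const_nhds (x := y)))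
      simpa using this
    have hfin := hden.smul hvec
    have h1 : (1:ℝ) • (-x + y) = y - x := by rw [one_smul]; abel
    rw [h1] at hfin
    simp only [mAdd]
    exact hfin
  have hm' : Tendsto (fun κ : ℝ => mAdd κ (-x) y) (nhdsWithin 0 (Set.Iio 0)) (nhds (y - x)) :=
    hm.mono_left nhdsWithin_le_nhds
  -- norm of mAdd eventually nonzero
  have hnorm : Tendsto (fun κ : ℝ => ‖mAdd κ (-x) y‖) (nhdsWithin 0 (Set.Iio 0))
      (nhds ‖y - x‖) := hm'.norm
  have hmnz : ∀ᶠ κ in nhdsWithin 0 (Set.Iio 0), ‖mAdd κ (-x) y‖ ≠ 0 := by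
    have := hnorm.eventually_ne (norm_ne_zero_iff.mpr hyx)
    exact this
  have hneg : ∀ᶠ κ in nhdsWithin (0:ℝ) (Set.Iio 0), κ < 0 :=
    eventually_nhdsWithin_of_forall fun κ hκ => hκ
  -- t κ := √(-κ) * ‖mAdd κ (-x) y‖ → 0 within {0}ᶜ
  have hsqrt : Tendsto (fun κ : ℝ => Real.sqrt (-κ)) (nhdsWithin 0 (Set.Iio 0)) (nhds 0) := by
    have : Continuous fun κ : ℝ => Real.sqrt (-κ) :=
      Real.continuous_sqrt.comp continuous_neg
    have := this.tendsto 0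
    simp only [neg_zero, Real.sqrt_zero] at this
    exact this.mono_left nhdsWithin_le_nhds
  have ht0 : Tendsto (fun κ : ℝ => Real.sqrt (-κ) * ‖mAdd κ (-x) y‖)
      (nhdsWithin 0 (Set.Iio 0)) (nhds 0) := by
    have := hsqrt.mul hnorm
    simpa using this
  have htne : ∀ᶠ κ in nhdsWithin (0:ℝ) (Set.Iio 0),
      Real.sqrt (-κ) * ‖mAdd κ (-x) y‖ ≠ 0 := by
    filter_upwards [hneg, hmnz] with κ hκ hn
    have : Real.sqrt (-κ) ≠ 0 := Real.sqrt_ne_zero'.mpr (by linarith)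
    exact mul_ne_zero this hn
  have ht : Tendsto (fun κ : ℝ => Real.sqrt (-κ) * ‖mAdd κ (-x) y‖)
      (nhdsWithin 0 (Set.Iio 0)) (nhdsWithin 0 {0}ᶜ) :=
    tendsto_nhdsWithin_iff.mpr ⟨ht0, htne⟩
  have hratio : Tendsto (fun κ : ℝ =>
      _root_.artanh (Real.sqrt (-κ) * ‖mAdd κ (-x) y‖) / (Real.sqrt (-κ) * ‖mAdd κ (-x) y‖))
      (nhdsWithin 0 (Set.Iio 0)) (nhds 1) := tendsto_artanh_div.comp ht
  -- 2 / lam κ x → 1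
  have hlam : Tendsto (fun κ : ℝ => 2 / lam κ x) (nhdsWithin 0 (Set.Iio 0)) (nhds 1) := by
    have hc : Continuous fun κ : ℝ => 1 + κ * ‖x‖ ^ 2 := by continuity
    have h1 : Tendsto (fun κ : ℝ => 1 + κ * ‖x‖ ^ 2) (nhds 0) (nhds 1) := by
      have := hc.tendsto 0; norm_num at this; exact this
    have hlam' : Tendsto (fun κ : ℝ => lam κ x) (nhds 0) (nhds 2) := by
      have := h1.inv₀ one_ne_zero
      have := this.const_mul (2 : ℝ)
      simp only [lam, div_eq_mul_inv]
      simpa using this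
    have := (tendsto_const_nhds (x := (2:ℝ))).div hlam' two_ne_zero
    norm_num at this
    exact this.mono_left nhdsWithin_le_nhds
  -- the scalar factor tends to 1
  have hscal : Tendsto (fun κ : ℝ => (2 / (Real.sqrt (-κ) * lam κ x)) *
      _root_.artanh (Real.sqrt (-κ) * ‖mAdd κ (-x) y‖) * ‖mAdd κ (-x) y‖⁻¹)
      (nhdsWithin 0 (Set.Iio 0)) (nhds 1) := by
    have hprod := hlam.mul hratio
    norm_num at hprod
    refine hprod.congr' ?_
    have hlampos : ∀ᶠ κ in nhdsWithin (0:ℝ) (Set.Iio 0), lam κ x ≠ 0 := by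
      have hc : Continuous fun κ : ℝ => 1 + κ * ‖x‖ ^ 2 := by continuity
      have h1 : Tendsto (fun κ : ℝ => 1 + κ * ‖x‖ ^ 2) (nhdsWithin 0 (Set.Iio 0)) (nhds 1) := by
        have := hc.tendsto 0; norm_num at this; exact this.mono_left nhdsWithin_le_nhds
      filter_upwards [h1.eventually_ne one_ne_zero] with κ hκ
      simp only [lam]
      exact div_ne_zero two_ne_zero hκ
    filter_upwards [hneg, hmnz, hlampos] with κ hκ hn hl
    have hcne : Real.sqrt (-κ) ≠ 0 := Real.sqrt_ne_zero'.mpr (by linarith)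
    field_simp
  have := hscal.smul hm'
  simp only [one_smul] at this
  exact this.congr fun κ => by simp [logMap]
end

section
/- (Hyperbolic Euler step converges to the Euclidean Euler step in the flat limit.) Fix points x ≠ w of a real inner product space and a step size τ ∈ (0, 1]. Then the map κ ↦ exp^κ_x(τ · log^κ_x(w)) tends to x + τ·(w − x) as κ → 0 from the left (κ → 0⁻ along negative reals). -/
open Real Filter

open scoped RealInnerProductSpace

variable {E : Type*} [NormedAddCommGroup E] [InnerProductSpace ℝ E]

lemma hasDerivAt_tanh_zero : HasDerivAt Real.tanh 1 0 := by
  have hs : HasDerivAt Real.sinh (Real.cosh 0) 0 := Real.hasDerivAt_sinh 0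
  have hc : HasDerivAt Real.cosh (Real.sinh 0) 0 := Real.hasDerivAt_cosh 0
  have h := hs.div hc (by simp [Real.cosh_zero])
  have heq : (Real.sinh / Real.cosh) = Real.tanh := by
    funext t; rw [Pi.div_apply, Real.tanh_eq_sinh_div_cosh]
  rw [heq] at h
  simpa [Real.cosh_zero, Real.sinh_zero] using h

lemma tendsto_ratio_of_hasDerivAt {g : ℝ → ℝ} (hg : HasDerivAt g 1 0) (hg0 : g 0 = 0)
    {α : Type*} {l : Filter α} {f : α → ℝ} (hf : Tendsto f l (nhdsWithin 0 {(0:ℝ)}ᶜ)) :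
    Tendsto (fun t => g (f t) / f t) l (nhds 1) := by
  have h := hasDerivAt_iff_tendsto_slope.1 hg
  have h2 := h.comp hf
  refine h2.congr fun t => ?_
  simp [slope_def_field, hg0]

lemma tendsto_mAdd {α : Type*} {l : Filter α} (a : E) {g : α → E} {b : E}
    {fκ : α → ℝ} (h1 : Tendsto fκ l (nhds 0)) (h2 : Tendsto g l (nhds b)) :
    Tendsto (fun t => mAdd (fκ t) a (g t)) l (nhds (a + b)) := by
  have hinner : Tendsto (fun t => ⟪a, g t⟫) l (nhds ⟪a, b⟫) :=
    tendsto_const_nhds.inner h2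
  have hn : Tendsto (fun t => ‖g t‖) l (nhds ‖b‖) := h2.norm
  have hD : Tendsto
      (fun t => 1 - 2 * fκ t * ⟪a, g t⟫ + (fκ t) ^ 2 * ‖a‖ ^ 2 * ‖g t‖ ^ 2) l (nhds 1) := by
    have := ((tendsto_const_nhds (x := (1:ℝ))).sub (((h1.const_mul 2)).mul hinner)).add
      (((h1.pow 2).mul_const (‖a‖ ^ 2)).mul (hn.pow 2))
    simpa using this
  have hc1 : Tendsto (fun t => 1 - 2 * fκ t * ⟪a, g t⟫ - fκ t * ‖g t‖ ^ 2) l (nhds 1) := by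
    have := ((tendsto_const_nhds (x := (1:ℝ))).sub (((h1.const_mul 2)).mul hinner)).sub
      (h1.mul (hn.pow 2))
    simpa using this
  have hc2 : Tendsto (fun t => 1 + fκ t * ‖a‖ ^ 2) l (nhds 1) := by
    have := (tendsto_const_nhds (x := (1:ℝ))).add (h1.mul_const (‖a‖ ^ 2))
    simpa using this
  have hN : Tendsto
      (fun t => (1 - 2 * fκ t * ⟪a, g t⟫ - fκ t * ‖g t‖ ^ 2) • a + (1 + fκ t * ‖a‖ ^ 2) • g t)
      l (nhds (a + b)) := by
    have := (hc1.smul (tendsto_const_nhds (x := a))).add (hc2.smul h2)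
    simpa using this
  have := (hD.inv₀ one_ne_zero).smul hN
  simpa [mAdd] using this

theorem euler_step_flat_limit (x w : E) (hxw : x ≠ w)
    (τ : ℝ) (hτ0 : 0 < τ) (hτ1 : τ ≤ 1) :
    Tendsto (fun κ : ℝ => expMap κ x (τ • logMap κ x w)) (nhdsWithin 0 (Set.Iio 0))
      (nhds (x + τ • (w - x))) := by
  classical
  set l := nhdsWithin (0:ℝ) (Set.Iio 0) with hl
  have hId : Tendsto (fun κ : ℝ => κ) l (nhds 0) := tendsto_id.mono_left nhdsWithin_le_nhds
  have hneg : ∀ᶠ κ in l, κ < 0 := eventually_mem_nhdsWithin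
  have hc : Tendsto (fun κ : ℝ => Real.sqrt (-κ)) l (nhds 0) := by
    have : Tendsto (fun κ : ℝ => Real.sqrt (-κ)) (nhds 0) (nhds (Real.sqrt (-0))) :=
      (Real.continuous_sqrt.comp continuous_neg).tendsto 0
    simpa using this.mono_left nhdsWithin_le_nhds
  have hcpos : ∀ᶠ κ in l, 0 < Real.sqrt (-κ) :=
    hneg.mono fun κ hκ => Real.sqrt_pos.2 (by linarith)
  have hwx : w - x ≠ 0 := sub_ne_zero.2 (Ne.symm hxw)
  -- u = mAdd κ (-x) w
  have hu : Tendsto (fun κ => mAdd κ (-x) w) l (nhds (w - x)) := by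
    have := tendsto_mAdd (-x) hId (tendsto_const_nhds (x := w))
    simpa [neg_add_eq_sub] using this
  have hun : Tendsto (fun κ => ‖mAdd κ (-x) w‖) l (nhds ‖w - x‖) := hu.norm
  have hupos : ∀ᶠ κ in l, 0 < ‖mAdd κ (-x) w‖ :=
    hun.eventually (eventually_gt_nhds (norm_pos_iff.2 hwx))
  -- conformal factor
  have hden : Tendsto (fun κ : ℝ => 1 + κ * ‖x‖ ^ 2) l (nhds 1) := by
    simpa using (tendsto_const_nhds (x := (1:ℝ))).add (hId.mul_const (‖x‖ ^ 2))
  have hlam : Tendsto (fun κ => lam κ x) l (nhds 2) := by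
    have := (tendsto_const_nhds (x := (2:ℝ))).div hden one_ne_zero
    simp only [lam]; rw [div_one] at this; exact this
  have hlampos : ∀ᶠ κ in l, 0 < lam κ x :=
    hlam.eventually (eventually_gt_nhds (by norm_num))
  -- f = √(-κ)·‖u‖ → 0 within ≠ 0
  have hf0 : Tendsto (fun κ => Real.sqrt (-κ) * ‖mAdd κ (-x) w‖) l (nhds 0) := by
    simpa using hc.mul hun
  have hfpos : ∀ᶠ κ in l, 0 < Real.sqrt (-κ) * ‖mAdd κ (-x) w‖ :=
    (hcpos.and hupos).mono fun κ h => mul_pos h.1 h.2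
  have hf : Tendsto (fun κ => Real.sqrt (-κ) * ‖mAdd κ (-x) w‖) l
      (nhdsWithin 0 {(0:ℝ)}ᶜ) := by
    rw [tendsto_nhdsWithin_iff]
    exact ⟨hf0, hfpos.mono fun κ h => h.ne'⟩
  have hratio1 : Tendsto (fun κ => _root_.artanh (Real.sqrt (-κ) * ‖mAdd κ (-x) w‖) /
      (Real.sqrt (-κ) * ‖mAdd κ (-x) w‖)) l (nhds 1) :=
    tendsto_ratio_of_hasDerivAt hasDerivAt_artanh_zero (by simp [_root_.artanh]) hf
  -- scalar in logMap
  have hs : Tendsto (fun κ => (2 / (Real.sqrt (-κ) * lam κ x)) *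
      _root_.artanh (Real.sqrt (-κ) * ‖mAdd κ (-x) w‖) * ‖mAdd κ (-x) w‖⁻¹) l (nhds 1) := by
    have h2 : Tendsto (fun κ => (2 / lam κ x) *
        (_root_.artanh (Real.sqrt (-κ) * ‖mAdd κ (-x) w‖) /
          (Real.sqrt (-κ) * ‖mAdd κ (-x) w‖))) l (nhds 1) := by
      have := ((tendsto_const_nhds (x := (2:ℝ))).div hlam two_ne_zero).mul hratio1
      norm_num at this
      exact this
    refine h2.congr' ?_
    filter_upwards [hcpos, hupos, hlampos] with κ h1 h2 h3
    simp only [div_eq_mul_inv, mul_inv]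
    ring
  have hlog : Tendsto (fun κ => logMap κ x w) l (nhds (w - x)) := by
    have := hs.smul hu
    simpa [logMap] using this
  -- v = τ • logMap
  have hv : Tendsto (fun κ => τ • logMap κ x w) l (nhds (τ • (w - x))) := hlog.const_smul τ
  have hvlim_ne : τ • (w - x) ≠ 0 := smul_ne_zero hτ0.ne' hwx
  have hvn : Tendsto (fun κ => ‖τ • logMap κ x w‖) l (nhds ‖τ • (w - x)‖) := hv.norm
  have hvpos : ∀ᶠ κ in l, 0 < ‖τ • logMap κ x w‖ :=
    hvn.eventually (eventually_gt_nhds (norm_pos_iff.2 hvlim_ne))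
  -- g-ratio for tanh
  have hg0 : Tendsto (fun κ => Real.sqrt (-κ) * lam κ x * ‖τ • logMap κ x w‖ / 2) l
      (nhds 0) := by
    have := ((hc.mul hlam).mul hvn).div_const 2
    simpa using this
  have hgpos : ∀ᶠ κ in l, 0 < Real.sqrt (-κ) * lam κ x * ‖τ • logMap κ x w‖ / 2 := by
    filter_upwards [hcpos, hlampos, hvpos] with κ h1 h2 h3
    positivity
  have hg : Tendsto (fun κ => Real.sqrt (-κ) * lam κ x * ‖τ • logMap κ x w‖ / 2) l
      (nhdsWithin 0 {(0:ℝ)}ᶜ) := by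
    rw [tendsto_nhdsWithin_iff]
    exact ⟨hg0, hgpos.mono fun κ h => h.ne'⟩
  have hratio2 : Tendsto (fun κ =>
      Real.tanh (Real.sqrt (-κ) * lam κ x * ‖τ • logMap κ x w‖ / 2) /
        (Real.sqrt (-κ) * lam κ x * ‖τ • logMap κ x w‖ / 2)) l (nhds 1) :=
    tendsto_ratio_of_hasDerivAt hasDerivAt_tanh_zero Real.tanh_zero hg
  -- coefficient in expMap
  have hcoef : Tendsto (fun κ =>
      Real.tanh (Real.sqrt (-κ) * lam κ x * ‖τ • logMap κ x w‖ / 2) /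
        (Real.sqrt (-κ) * ‖τ • logMap κ x w‖)) l (nhds 1) := by
    have h2 : Tendsto (fun κ => (lam κ x / 2) *
        (Real.tanh (Real.sqrt (-κ) * lam κ x * ‖τ • logMap κ x w‖ / 2) /
          (Real.sqrt (-κ) * lam κ x * ‖τ • logMap κ x w‖ / 2))) l (nhds 1) := by
      have := (hlam.div_const 2).mul hratio2
      norm_num at this
      exact this
    refine h2.congr' ?_
    filter_upwards [hcpos, hlampos, hvpos] with κ h1 h2 h3
    have e1 : Real.sqrt (-κ) ≠ 0 := h1.ne'
    have e2 : lam κ x ≠ 0 := h2.ne'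
    have e3 : ‖τ • logMap κ x w‖ ≠ 0 := h3.ne'
    field_simp
  have ha : Tendsto (fun κ =>
      (Real.tanh (Real.sqrt (-κ) * lam κ x * ‖τ • logMap κ x w‖ / 2) /
        (Real.sqrt (-κ) * ‖τ • logMap κ x w‖)) • (τ • logMap κ x w)) l
      (nhds (τ • (w - x))) := by
    have := hcoef.smul hv
    simpa using this
  have hfinal := tendsto_mAdd x hId ha
  refine hfinal.congr' ?_
  filter_upwards [hvpos] with κ hκ
  have hne : τ • logMap κ x w ≠ 0 := norm_pos_iff.1 hκ
  simp [expMap, hne]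
end

section
/- (The Möbius gyromidpoint recovers the weighted arithmetic mean in the flat limit.) Let z₁, …, z_J be points of a real inner product space with zⱼ ≠ 0 not all zero in weighted sum, and let η₁, …, η_J be strictly positive real weights. For κ < 0 define the gyromidpoint μκ = (1/2) ⊗κ ( (Σⱼ ηⱼ·λκ(zⱼ)·zⱼ) / (Σⱼ ηⱼ·(λκ(zⱼ) − 1)) ), where λκ(z) = 2/(1 + κ‖z‖²). If Σⱼ ηⱼ·zⱼ ≠ 0, then μκ tends to (Σⱼ ηⱼ·zⱼ) / (Σⱼ ηⱼ) as κ → 0 from the left (κ → 0⁻ along negative reals). -/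
open Real Filter

open scoped RealInnerProductSpace

variable {E : Type*} [NormedAddCommGroup E] [InnerProductSpace ℝ E]

lemma key_limit :
    Filter.Tendsto (fun t : ℝ => Real.tanh ((1/2 : ℝ) * _root_.artanh t) / t)
      (nhdsWithin 0 {(0:ℝ)}ᶜ) (nhds (1/2 : ℝ)) := by
  have hinner : HasDerivAt (fun t : ℝ => (1/2 : ℝ) * _root_.artanh t) (1/2) 0 := by
    simpa using hasDerivAt_artanh_zero.const_mul (1/2 : ℝ)
  have houter : HasDerivAt Real.tanh 1 ((1/2 : ℝ) * _root_.artanh 0) := by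
    simpa [_root_.artanh_zero] using hasDerivAt_tanh_zero
  have h : HasDerivAt (fun t : ℝ => Real.tanh ((1/2 : ℝ) * _root_.artanh t)) (1/2) 0 := by
    have hc := houter.comp 0 hinner
    rw [one_mul] at hc
    exact hc
  have := hasDerivAt_iff_tendsto_slope.1 h
  refine this.congr fun t => ?_
  simp [slope_def_field, _root_.artanh_zero, div_eq_mul_inv]

theorem gyromidpoint_flat_limit (J : ℕ) (z : Fin J → E) (η : Fin J → ℝ)
    (hz : ∀ j, z j ≠ 0) (hη : ∀ j, 0 < η j) (hsum : ∑ j, η j • z j ≠ 0) :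
    Tendsto
      (fun κ : ℝ => mSmul κ (1 / 2)
        ((∑ j, η j * (lam κ (z j) - 1))⁻¹ • ∑ j, (η j * lam κ (z j)) • z j))
      (nhdsWithin 0 (Set.Iio 0))
      (nhds ((∑ j, η j)⁻¹ • ∑ j, η j • z j)) := by
  classical
  -- J > 0
  rcases Nat.eq_zero_or_pos J with hJ | hJ
  · subst hJ; simp at hsum
  set S : ℝ := ∑ j, η j with hS
  have hSpos : 0 < S := Finset.sum_pos (fun j _ => hη j)
    (Finset.univ_nonempty_iff.2 (Fin.pos_iff_nonempty.1 hJ))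
  have hSne : S ≠ 0 := ne_of_gt hSpos
  set T : E := ∑ j, η j • z j with hT
  set w : ℝ → E := fun κ =>
    (∑ j, η j * (lam κ (z j) - 1))⁻¹ • ∑ j, (η j * lam κ (z j)) • z j with hwdef
  set L : E := S⁻¹ • ((2:ℝ) • T) with hL
  have hLne : L ≠ 0 := by
    simp only [hL, smul_smul]
    intro h
    rcases smul_eq_zero.1 h with h' | h'
    · have : S⁻¹ * 2 ≠ 0 := by positivity
      exact this h'
    · exact hsum h'
  -- limits of lam
  have hlam : ∀ j : Fin J, Tendsto (fun κ : ℝ => lam κ (z j)) (nhds 0) (nhds 2) := by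
    intro j
    have hden : Tendsto (fun κ : ℝ => 1 + κ * ‖z j‖ ^ 2) (nhds 0) (nhds 1) := by
      have : Tendsto (fun κ : ℝ => κ * ‖z j‖ ^ 2) (nhds 0) (nhds 0) := by
        have h := (continuous_mul_right (‖z j‖ ^ 2)).tendsto (0:ℝ)
        rwa [zero_mul] at h
      simpa using this.const_add 1
    have := (tendsto_const_nhds (x := (2:ℝ))).div hden one_ne_zero
    rw [div_one] at this
    exact this
  have hden : Tendsto (fun κ : ℝ => ∑ j, η j * (lam κ (z j) - 1)) (nhds 0) (nhds S) := by
    have : Tendsto (fun κ : ℝ => ∑ j, η j * (lam κ (z j) - 1)) (nhds 0)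
        (nhds (∑ j : Fin J, η j * (2 - 1))) := by
      exact tendsto_finset_sum _ fun j _ =>
        (tendsto_const_nhds.mul ((hlam j).sub tendsto_const_nhds))
    have h21 : (∑ j : Fin J, η j * ((2:ℝ) - 1)) = S := by norm_num [hS]
    rwa [h21] at this
  have hnum : Tendsto (fun κ : ℝ => ∑ j, (η j * lam κ (z j)) • z j) (nhds 0)
      (nhds (∑ j : Fin J, (η j * 2) • z j)) :=
    tendsto_finset_sum _ fun j _ =>
      ((tendsto_const_nhds.mul (hlam j)).smul tendsto_const_nhds)
  have hsum2 : (∑ j : Fin J, (η j * 2) • z j) = (2:ℝ) • T := by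
    rw [hT, Finset.smul_sum]
    exact Finset.sum_congr rfl fun j _ => by rw [mul_comm, mul_smul]
  have hw : Tendsto w (nhds 0) (nhds L) := by
    have := (hden.inv₀ hSne).smul hnum
    rw [hsum2] at this
    exact this
  have hw' : Tendsto w (nhdsWithin 0 (Set.Iio 0)) (nhds L) := hw.mono_left nhdsWithin_le_nhds
  have hwne : ∀ᶠ κ : ℝ in nhdsWithin 0 (Set.Iio 0), w κ ≠ 0 := hw'.eventually_ne hLne
  -- t κ = √(-κ) * ‖w κ‖ tends to 0 within {0}ᶜ
  have hc : Tendsto (fun κ : ℝ => Real.sqrt (-κ)) (nhdsWithin 0 (Set.Iio 0)) (nhds 0) := by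
    have : Continuous fun κ : ℝ => Real.sqrt (-κ) :=
      Real.continuous_sqrt.comp continuous_neg
    simpa using (this.tendsto 0).mono_left nhdsWithin_le_nhds
  have hcpos : ∀ᶠ κ : ℝ in nhdsWithin 0 (Set.Iio 0), 0 < Real.sqrt (-κ) := by
    filter_upwards [self_mem_nhdsWithin] with κ hκ
    exact Real.sqrt_pos.2 (by linarith [Set.mem_Iio.1 hκ])
  have ht0 : Tendsto (fun κ : ℝ => Real.sqrt (-κ) * ‖w κ‖) (nhdsWithin 0 (Set.Iio 0))
      (nhds 0) := by
    have := hc.mul (hw'.norm)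
    simpa using this
  have ht : Tendsto (fun κ : ℝ => Real.sqrt (-κ) * ‖w κ‖) (nhdsWithin 0 (Set.Iio 0))
      (nhdsWithin 0 {(0:ℝ)}ᶜ) := by
    rw [tendsto_nhdsWithin_iff]
    refine ⟨ht0, ?_⟩
    filter_upwards [hcpos, hwne] with κ h1 h2
    have : 0 < Real.sqrt (-κ) * ‖w κ‖ := mul_pos h1 (norm_pos_iff.2 h2)
    exact ne_of_gt this
  -- the scalar tends to 1/2
  have hscal : Tendsto (fun κ : ℝ =>
      (1 / Real.sqrt (-κ)) * Real.tanh ((1/2 : ℝ) * _root_.artanh (Real.sqrt (-κ) * ‖w κ‖)) *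
        ‖w κ‖⁻¹) (nhdsWithin 0 (Set.Iio 0)) (nhds (1/2 : ℝ)) := by
    have := key_limit.comp ht
    refine this.congr fun κ => ?_
    simp only [Function.comp]
    rw [div_eq_mul_inv, mul_inv]
    ring
  -- assemble
  have hfinal := hscal.smul hw'
  have heq : ∀ᶠ κ : ℝ in nhdsWithin 0 (Set.Iio 0),
      ((1 / Real.sqrt (-κ)) * Real.tanh ((1/2 : ℝ) * _root_.artanh (Real.sqrt (-κ) * ‖w κ‖)) *
        ‖w κ‖⁻¹) • w κ = mSmul κ (1/2) (w κ) := by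
    filter_upwards [hwne] with κ hne
    rw [mSmul, if_neg hne]
  have hlim : ((1/2 : ℝ) : ℝ) • L = S⁻¹ • T := by
    rw [hL, smul_smul, smul_smul]
    congr 1
    field_simp
  have := hfinal.congr' heq
  rw [hlim] at this
  exact this
end
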